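/- Define F(t,Y) = (2/√π) ∫_0^t ∫_0^∞ (E_0^-(Y,Y',t-s) - E_0^+(Y,Y',t-s)) · (∫_{Y'/(2√s)}^∞ e^{-σ²} dσ) dY' ds for real Y ≥ 0, where E_0^∓ = e^{-(Y∓Y')²/(4(t-s))}/√(4π(t-s)). Then for every μ > 0 and T > 0 there is C with sup_{Y ≥ 0, 0<t≤T} e^{μ Y} |F(t,Y)| ≤ C t ≤ C T. -/

import Mathlib

open MeasureTheory

/-- Half-line heat kernel, direct part (time difference `τ`). -/
noncomputable def E0m (τ Y Y' : ℝ) : ℝ :=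
  Real.exp (-(Y - Y') ^ 2 / (4 * τ)) / Real.sqrt (4 * Real.pi * τ)

/-- Half-line heat kernel, reflected part (time difference `τ`). -/
noncomputable def E0p (τ Y Y' : ℝ) : ℝ :=
  Real.exp (-(Y + Y') ^ 2 / (4 * τ)) / Real.sqrt (4 * Real.pi * τ)

/-- The profile `F` such that `h' = ε ∂ₓₓ u₀₀ F`. -/
noncomputable def Fprof (t Y : ℝ) : ℝ :=
  (2 / Real.sqrt Real.pi) *
    ∫ s in (0:ℝ)..t,
      ∫ Y' in Set.Ioi (0:ℝ),
        (E0m (t - s) Y Y' - E0p (t - s) Y Y') *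
          ∫ σ in Set.Ioi (Y' / (2 * Real.sqrt s)), Real.exp (-σ ^ 2)


open Real Set

lemma gauss_int : Integrable (fun σ : ℝ => Real.exp (-σ^2)) := by
  simpa using integrable_exp_neg_mul_sq (by norm_num : (0:ℝ) < 1)

lemma gauss_int_half : Integrable (fun σ : ℝ => Real.exp (-(σ^2/2))) := by
  have := integrable_exp_neg_mul_sq (by norm_num : (0:ℝ) < 1/2)
  simpa [neg_div, mul_comm, div_eq_inv_mul] using this

lemma g_bound (a : ℝ) (ha : 0 ≤ a) :
    ∫ σ in Set.Ioi a, Real.exp (-σ^2) ≤ Real.sqrt (2*π) * Real.exp (-(a^2/2)) := by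
  have h2 : Integrable (fun σ : ℝ => Real.exp (-(a^2/2)) * Real.exp (-(σ^2/2))) :=
    gauss_int_half.const_mul _
  calc ∫ σ in Set.Ioi a, Real.exp (-σ^2)
      ≤ ∫ σ in Set.Ioi a, Real.exp (-(a^2/2)) * Real.exp (-(σ^2/2)) := by
        apply setIntegral_mono_on gauss_int.integrableOn h2.integrableOn measurableSet_Ioi
        intro x hx
        rw [← Real.exp_add, Real.exp_le_exp]
        have hax : a ≤ x := le_of_lt hx
        nlinarith
    _ = Real.exp (-(a^2/2)) * ∫ σ in Set.Ioi a, Real.exp (-(σ^2/2)) := by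
        rw [MeasureTheory.integral_const_mul]
    _ ≤ Real.exp (-(a^2/2)) * ∫ σ : ℝ, Real.exp (-(σ^2/2)) := by
        gcongr
        exacts [Filter.Eventually.of_forall fun x => (Real.exp_pos _).le, gauss_int_half, Measure.restrict_le_self]
    _ = Real.sqrt (2*π) * Real.exp (-(a^2/2)) := by
        have : ∫ σ : ℝ, Real.exp (-(σ^2/2)) = Real.sqrt (2*π) := by
          have h := integral_gaussian (1/2)
          rw [show π / (1/2) = 2*π by ring] at h
          rw [← h]
          congr 1; ext x; ring_nf
        rw [this, mul_comm]

lemma inner_bound (μ T Y τ s : ℝ) (hμ : 0 < μ) (hY : 0 ≤ Y) (hτ : 0 < τ) (hτT : τ ≤ T)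
    (hs : 0 < s) (hsT : s ≤ T) :
    ‖∫ Y' in Set.Ioi (0:ℝ), (E0m τ Y Y' - E0p τ Y Y') *
        ∫ σ in Set.Ioi (Y' / (2 * Real.sqrt s)), Real.exp (-σ ^ 2)‖ ≤
      2 * (Real.sqrt (2*π) * Real.exp (3*μ^2*T)) * Real.exp (-(μ*Y)) := by
  set A : ℝ := Real.sqrt (2*π) * Real.exp (3*μ^2*T) with hA
  have hA0 : 0 < A := by positivity
  set N : ℝ := Real.sqrt (4*π*τ) with hN
  have hN0 : 0 < N := by positivity
  have hb : 0 < 1/(4*τ) := by positivity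
  set c1 : ℝ := Y - 2*μ*τ with hc1
  set c2 : ℝ := 2*μ*τ - Y with hc2
  have hμτT : μ^2*τ ≤ μ^2*T := mul_le_mul_of_nonneg_left hτT (sq_nonneg μ)
  have hμsT : μ^2*s ≤ μ^2*T := mul_le_mul_of_nonneg_left hsT (sq_nonneg μ)
  have hμT0 : 0 ≤ μ^2*T := le_trans (by positivity) hμsT
  have hint1 : Integrable (fun x : ℝ => Real.exp (-(1/(4*τ)) * (x - c1)^2)) :=
    (integrable_exp_neg_mul_sq hb).comp_sub_right c1
  have hint2 : Integrable (fun x : ℝ => Real.exp (-(1/(4*τ)) * (x - c2)^2)) :=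
    (integrable_exp_neg_mul_sq hb).comp_sub_right c2
  set B : ℝ → ℝ := fun Y' => Real.exp (-(μ*Y)) * (A/N *
      (Real.exp (-(1/(4*τ)) * (Y' - c1)^2) + Real.exp (-(1/(4*τ)) * (Y' - c2)^2))) with hB
  have hBint : Integrable B := (((hint1.add hint2).const_mul (A/N)).const_mul _)
  -- pointwise bound
  have hpt : ∀ Y' ∈ Set.Ioi (0:ℝ),
      ‖(E0m τ Y Y' - E0p τ Y Y') * ∫ σ in Set.Ioi (Y' / (2 * Real.sqrt s)), Real.exp (-σ ^ 2)‖
        ≤ B Y' := by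
    intro Y' hY'
    have hY'0 : 0 < Y' := hY'
    set g : ℝ := ∫ σ in Set.Ioi (Y' / (2 * Real.sqrt s)), Real.exp (-σ ^ 2) with hg
    have hg0 : 0 ≤ g := setIntegral_nonneg measurableSet_Ioi fun x _ => (Real.exp_pos _).le
    have ha0 : 0 ≤ Y' / (2 * Real.sqrt s) := by positivity
    have hgb : g ≤ Real.sqrt (2*π) * Real.exp (-(Y'^2/(8*s))) := by
      have := g_bound (Y' / (2 * Real.sqrt s)) ha0
      have hsq : (Y' / (2 * Real.sqrt s))^2 / 2 = Y'^2/(8*s) := by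
        rw [div_pow, mul_pow, Real.sq_sqrt hs.le]
        ring
      rwa [hsq] at this
    have hexp1 : μ^2*τ + μ*Y' + -(Y'^2/(8*s)) ≤ 3*μ^2*T := by
      have key2 : μ*Y' - 2*μ^2*s ≤ Y'^2/(8*s) := by
        rw [le_div_iff₀ (by positivity : (0:ℝ) < 8*s)]
        nlinarith [sq_nonneg (Y' - 4*μ*s)]
      linarith
    have hexp2 : -(μ*Y') + μ^2*τ + -(Y'^2/(8*s)) ≤ 3*μ^2*T := by
      have h1 : 0 ≤ μ*Y' := by positivity
      have h2 : 0 ≤ Y'^2/(8*s) := by positivity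
      linarith
    have hm : Real.exp (μ*Y) * E0m τ Y Y'
        = Real.exp (μ^2*τ + μ*Y') * Real.exp (-(1/(4*τ)) * (Y' - c1)^2) / N := by
      unfold E0m
      rw [mul_div_assoc', ← Real.exp_add, ← Real.exp_add, hN]
      congr 1
      rw [hc1]; field_simp
      ring
    have hp : Real.exp (μ*Y) * E0p τ Y Y'
        = Real.exp (-(μ*Y') + μ^2*τ) * Real.exp (-(1/(4*τ)) * (Y' - c2)^2) / N := by
      unfold E0p
      rw [mul_div_assoc', ← Real.exp_add, ← Real.exp_add, hN]
      congr 1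
      rw [hc2]; field_simp
      ring
    have hE0m0 : 0 ≤ E0m τ Y Y' := by unfold E0m; positivity
    have hE0p0 : 0 ≤ E0p τ Y Y' := by unfold E0p; positivity
    have key : Real.exp (μ*Y) *
        ‖(E0m τ Y Y' - E0p τ Y Y') * g‖ ≤
        A/N * (Real.exp (-(1/(4*τ)) * (Y' - c1)^2) + Real.exp (-(1/(4*τ)) * (Y' - c2)^2)) := by
      have habs : ‖(E0m τ Y Y' - E0p τ Y Y') * g‖ ≤ (E0m τ Y Y' + E0p τ Y Y') * g := by
        rw [norm_mul, Real.norm_eq_abs, Real.norm_eq_abs, abs_of_nonneg hg0]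
        gcongr
        exact (abs_sub _ _).trans (by rw [abs_of_nonneg hE0m0, abs_of_nonneg hE0p0])
      have term1 : Real.exp (μ*Y) * (E0m τ Y Y' * g) ≤
          A/N * Real.exp (-(1/(4*τ)) * (Y' - c1)^2) := by
        calc Real.exp (μ*Y) * (E0m τ Y Y' * g)
            = (Real.exp (μ*Y) * E0m τ Y Y') * g := by ring
          _ = Real.exp (μ^2*τ + μ*Y') * Real.exp (-(1/(4*τ)) * (Y' - c1)^2) / N * g := by
              rw [hm]
          _ ≤ Real.exp (μ^2*τ + μ*Y') * Real.exp (-(1/(4*τ)) * (Y' - c1)^2) / N *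
              (Real.sqrt (2*π) * Real.exp (-(Y'^2/(8*s)))) := by gcongr <;> positivity
          _ = Real.sqrt (2*π) * Real.exp (μ^2*τ + μ*Y' + -(Y'^2/(8*s))) *
              Real.exp (-(1/(4*τ)) * (Y' - c1)^2) / N := by
              rw [Real.exp_add (μ^2*τ + μ*Y') (-(Y'^2/(8*s)))]; ring
          _ ≤ Real.sqrt (2*π) * Real.exp (3*μ^2*T) *
              Real.exp (-(1/(4*τ)) * (Y' - c1)^2) / N := by
              gcongr
          _ = A/N * Real.exp (-(1/(4*τ)) * (Y' - c1)^2) := by rw [hA]; ring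
      have term2 : Real.exp (μ*Y) * (E0p τ Y Y' * g) ≤
          A/N * Real.exp (-(1/(4*τ)) * (Y' - c2)^2) := by
        calc Real.exp (μ*Y) * (E0p τ Y Y' * g)
            = (Real.exp (μ*Y) * E0p τ Y Y') * g := by ring
          _ = Real.exp (-(μ*Y') + μ^2*τ) * Real.exp (-(1/(4*τ)) * (Y' - c2)^2) / N * g := by
              rw [hp]
          _ ≤ Real.exp (-(μ*Y') + μ^2*τ) * Real.exp (-(1/(4*τ)) * (Y' - c2)^2) / N *
              (Real.sqrt (2*π) * Real.exp (-(Y'^2/(8*s)))) := by gcongr <;> positivity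
          _ = Real.sqrt (2*π) * Real.exp ((-(μ*Y') + μ^2*τ) + -(Y'^2/(8*s))) *
              Real.exp (-(1/(4*τ)) * (Y' - c2)^2) / N := by
              rw [Real.exp_add (-(μ*Y') + μ^2*τ) (-(Y'^2/(8*s)))]; ring
          _ ≤ Real.sqrt (2*π) * Real.exp (3*μ^2*T) *
              Real.exp (-(1/(4*τ)) * (Y' - c2)^2) / N := by
              gcongr
          _ = A/N * Real.exp (-(1/(4*τ)) * (Y' - c2)^2) := by rw [hA]; ring
      calc Real.exp (μ*Y) * ‖(E0m τ Y Y' - E0p τ Y Y') * g‖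
          ≤ Real.exp (μ*Y) * ((E0m τ Y Y' + E0p τ Y Y') * g) := by gcongr <;> positivity
        _ = Real.exp (μ*Y) * (E0m τ Y Y' * g) + Real.exp (μ*Y) * (E0p τ Y Y' * g) := by ring
        _ ≤ A/N * Real.exp (-(1/(4*τ)) * (Y' - c1)^2) +
            A/N * Real.exp (-(1/(4*τ)) * (Y' - c2)^2) := add_le_add term1 term2
        _ = A/N * (Real.exp (-(1/(4*τ)) * (Y' - c1)^2) + Real.exp (-(1/(4*τ)) * (Y' - c2)^2)) := by
            ring
    show ‖(E0m τ Y Y' - E0p τ Y Y') * g‖ ≤ Real.exp (-(μ*Y)) * (A/N *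
      (Real.exp (-(1/(4*τ)) * (Y' - c1)^2) + Real.exp (-(1/(4*τ)) * (Y' - c2)^2)))
    rw [Real.exp_neg, ← div_eq_inv_mul, le_div_iff₀ (Real.exp_pos _), mul_comm]
    exact key
  have hle : ‖∫ Y' in Set.Ioi (0:ℝ), (E0m τ Y Y' - E0p τ Y Y') *
      ∫ σ in Set.Ioi (Y' / (2 * Real.sqrt s)), Real.exp (-σ ^ 2)‖ ≤ ∫ Y' in Set.Ioi (0:ℝ), B Y' := by
    apply MeasureTheory.norm_integral_le_of_norm_le hBint.integrableOn
    rw [ae_restrict_iff' measurableSet_Ioi]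
    exact Filter.Eventually.of_forall hpt
  refine hle.trans ?_
  have hB0 : 0 ≤ᵐ[volume] B := Filter.Eventually.of_forall fun x => by
    rw [hB]; positivity
  refine (setIntegral_le_integral hBint hB0).trans ?_
  have hgauss : ∀ c : ℝ, ∫ x : ℝ, Real.exp (-(1/(4*τ)) * (x - c)^2) = N := by
    intro c
    rw [MeasureTheory.integral_sub_right_eq_self (fun y => Real.exp (-(1/(4*τ)) * y^2)) c,
      integral_gaussian, hN]
    congr 1
    field_simp
  have hBval : ∫ Y', B Y' = Real.exp (-(μ*Y)) * (A/N * (N + N)) := by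
    rw [hB]
    rw [MeasureTheory.integral_const_mul, MeasureTheory.integral_const_mul,
      integral_add hint1 hint2, hgauss c1, hgauss c2]
  rw [hBval, show Real.exp (-(μ*Y)) * (A/N * (N + N)) = (2*A) * (N/N) * Real.exp (-(μ*Y)) by ring,
    div_self hN0.ne', mul_one]

open Real Set in
theorem stmt_13 (μ T : ℝ) (hμ : 0 < μ) (hT : 0 < T) :
    ∃ C : ℝ, 0 < C ∧ ∀ Y t : ℝ, 0 ≤ Y → 0 < t → t ≤ T →
      Real.exp (μ * Y) * |Fprof t Y| ≤ C * t ∧ C * t ≤ C * T := by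
  have hπ : 0 < Real.sqrt π := Real.sqrt_pos.mpr Real.pi_pos
  set A : ℝ := Real.sqrt (2*π) * Real.exp (3*μ^2*T) with hA
  have hA0 : 0 < A := by positivity
  refine ⟨(2/Real.sqrt π) * (2*A), by positivity, ?_⟩
  intro Y t hY ht htT
  set C : ℝ := (2/Real.sqrt π) * (2*A) with hC
  have hC0 : 0 < C := by positivity
  refine ⟨?_, mul_le_mul_of_nonneg_left htT hC0.le⟩
  have hbound : ∀ s ∈ Set.uIoc (0:ℝ) t,
      ‖∫ Y' in Set.Ioi (0:ℝ), (E0m (t - s) Y Y' - E0p (t - s) Y Y') *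
          ∫ σ in Set.Ioi (Y' / (2 * Real.sqrt s)), Real.exp (-σ ^ 2)‖ ≤
        2*A * Real.exp (-(μ*Y)) := by
    rw [Set.uIoc_of_le ht.le]
    rintro s ⟨hs0, hst⟩
    rcases eq_or_lt_of_le hst with heq | hlt
    · have hz : ∀ Y' : ℝ, (E0m (t - s) Y Y' - E0p (t - s) Y Y') *
          (∫ σ in Set.Ioi (Y' / (2 * Real.sqrt s)), Real.exp (-σ ^ 2)) = 0 := by
        intro Y'
        simp [E0m, E0p, heq]
      simp only [hz, integral_zero, norm_zero]
      positivity
    · have h := inner_bound μ T Y (t - s) s hμ hY (by linarith) (by linarith) hs0 (by linarith)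
      simpa [hA] using h
  have hInt := intervalIntegral.norm_integral_le_of_norm_le_const hbound
  have hFp : |Fprof t Y| = (2/Real.sqrt π) *
      ‖∫ s in (0:ℝ)..t, ∫ Y' in Set.Ioi (0:ℝ), (E0m (t - s) Y Y' - E0p (t - s) Y Y') *
          ∫ σ in Set.Ioi (Y' / (2 * Real.sqrt s)), Real.exp (-σ ^ 2)‖ := by
    rw [Fprof, abs_mul, abs_of_nonneg (by positivity : (0:ℝ) ≤ 2/Real.sqrt π), Real.norm_eq_abs]
  calc Real.exp (μ*Y) * |Fprof t Y|
      = (2/Real.sqrt π) * Real.exp (μ*Y) *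
        ‖∫ s in (0:ℝ)..t, ∫ Y' in Set.Ioi (0:ℝ), (E0m (t - s) Y Y' - E0p (t - s) Y Y') *
          ∫ σ in Set.Ioi (Y' / (2 * Real.sqrt s)), Real.exp (-σ ^ 2)‖ := by
        rw [hFp]; ring
    _ ≤ (2/Real.sqrt π) * Real.exp (μ*Y) * (2*A * Real.exp (-(μ*Y)) * |t - 0|) := by
        have hnn : (0:ℝ) ≤ (2/Real.sqrt π) * Real.exp (μ*Y) := by positivity
        exact mul_le_mul_of_nonneg_left hInt hnn
    _ = C * |t - 0| * (Real.exp (μ*Y) * Real.exp (-(μ*Y))) := by rw [hC]; ring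
    _ = C * t := by
        rw [← Real.exp_add, add_neg_cancel, Real.exp_zero, mul_one, sub_zero, abs_of_pos ht]
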